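/- For any nondegenerate triangle in the plane there is a unique circumscribed ellipse whose tangent at each vertex is parallel to the opposite side: given v₁, v₂, v₃ ∈ ℝ² affinely independent, there exist a unique point c ∈ ℝ² and a unique positive-definite quadratic form Q on ℝ² with associated symmetric bilinear form B (so Q(w) = B(w,w)) such that, for each i = 1,2,3 (indices modulo 3), Q(vᵢ − c) = 1 and B(vᵢ − c, v_{i+1} − v_{i+2}) = 0. -/

import Mathlib

set_option maxHeartbeats 1000000

open QuadraticMap

noncomputable section SteinerAux

variable (v : Fin 3 → (Fin 2 → ℝ))

/-- The centroid of the triangle. -/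
def stC : Fin 2 → ℝ := (3:ℝ)⁻¹ • (v 0 + v 1 + v 2)

lemma pair_indep (hv : AffineIndependent ℝ v) :
    LinearIndependent ℝ ![v 0 - stC v, v 1 - stC v] := by
  have h := (affineIndependent_iff_linearIndependent_vsub ℝ v 2).1 hv
  have h2 := h.comp (fun j : Fin 2 => if j = 0 then (⟨0, by decide⟩ : {x : Fin 3 // x ≠ 2}) else ⟨1, by decide⟩)
    (by intro a b hab; fin_cases a <;> fin_cases b <;> simp_all)
  rw [Fintype.linearIndependent_iff] at h2
  rw [LinearIndependent.pair_iff]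
  intro s t hst
  have key : (2*s - t) • (v 0 -ᵥ v 2) + (2*t - s) • (v 1 -ᵥ v 2) = 0 := by
    have : s • (v 0 - stC v) + t • (v 1 - stC v) = 0 := hst
    funext k
    have := congrFun this k
    simp [stC, vsub_eq_sub, Pi.smul_apply, Pi.sub_apply, Pi.add_apply, smul_eq_mul] at this ⊢
    ring_nf
    ring_nf at this
    linarith
  have h3 := h2 (fun j => if j = 0 then 2*s - t else 2*t - s) (by
    rw [Fin.sum_univ_two]
    simpa using key)
  have e0 := h3 0
  have e1 := h3 1
  simp at e0 e1
  constructor <;> linarith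

def stBasis (hv : AffineIndependent ℝ v) : Module.Basis (Fin 2) ℝ (Fin 2 → ℝ) :=
  basisOfLinearIndependentOfCardEqFinrank (pair_indep v hv) (by simp)

def stQ (hv : AffineIndependent ℝ v) : QuadraticForm ℝ (Fin 2 → ℝ) :=
  ((!![1, -1/2; -1/2, 1] : Matrix (Fin 2) (Fin 2) ℝ).toQuadraticMap').comp
    (stBasis v hv).equivFun.toLinearMap

lemma stQ_apply (hv : AffineIndependent ℝ v) (x : Fin 2 → ℝ) :
    stQ v hv x = ((stBasis v hv).equivFun x 0)^2 + ((stBasis v hv).equivFun x 1)^2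
      - ((stBasis v hv).equivFun x 0) * ((stBasis v hv).equivFun x 1) := by
  simp [stQ, Matrix.toQuadraticMap', Matrix.toQuadraticForm', QuadraticMap.comp_apply,
    LinearMap.BilinMap.toQuadraticMap_apply, Matrix.toLinearMap₂'_apply, Fin.sum_univ_two]
  ring

lemma stQ_posDef (hv : AffineIndependent ℝ v) : (stQ v hv).PosDef := by
  intro x hx
  rw [stQ_apply]
  set a := (stBasis v hv).equivFun x 0
  set b := (stBasis v hv).equivFun x 1
  have hab : a ≠ 0 ∨ b ≠ 0 := by
    by_contra h
    push_neg at h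
    apply hx
    have : (stBasis v hv).equivFun x = 0 := by
      funext j; fin_cases j
      · exact h.1
      · exact h.2
    simpa using (stBasis v hv).equivFun.map_eq_zero_iff.1 this
  rcases hab with h | h <;> nlinarith [sq_nonneg (a-b), sq_nonneg a, sq_nonneg b, pow_pos (abs_pos.2 h) 2, sq_abs a, sq_abs b]

lemma stBasis_zero (hv : AffineIndependent ℝ v) : stBasis v hv 0 = v 0 - stC v := by
  rw [stBasis, coe_basisOfLinearIndependentOfCardEqFinrank]; rfl

lemma stBasis_one (hv : AffineIndependent ℝ v) : stBasis v hv 1 = v 1 - stC v := by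
  rw [stBasis, coe_basisOfLinearIndependentOfCardEqFinrank]; rfl

lemma stEF (hv : AffineIndependent ℝ v) (x : Fin 2 → ℝ) (a b : ℝ)
    (h : x = a • (v 0 - stC v) + b • (v 1 - stC v)) :
    (stBasis v hv).equivFun x = ![a, b] := by
  subst h
  rw [← stBasis_zero v hv, ← stBasis_one v hv]
  funext j
  simp only [map_add, _root_.map_smul, Pi.add_apply, Pi.smul_apply, Module.Basis.equivFun_self, smul_eq_mul]
  fin_cases j <;> simp

/-- Expansion of a quadratic form on a linear combination. -/
lemma qexpand (Q : QuadraticForm ℝ (Fin 2 → ℝ)) (a b : ℝ) (x y : Fin 2 → ℝ) :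
    Q (a • x + b • y) = a^2 * Q x + b^2 * Q y + (a*b) * polar Q x y := by
  have h1 : Q (a • x + b • y) = Q (a•x) + Q (b•y) + polar Q (a•x) (b•y) := by
    rw [polar]; ring
  rw [h1, polar_smul_left, polar_smul_right, QuadraticMap.map_smul (Q := Q), QuadraticMap.map_smul (Q := Q)]
  simp [smul_eq_mul]; ring

end SteinerAux

theorem unique_inscribed_steiner_ellipse (v : Fin 3 → (Fin 2 → ℝ))
    (hv : AffineIndependent ℝ v) :
    ∃! cQ : (Fin 2 → ℝ) × QuadraticForm ℝ (Fin 2 → ℝ),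
      cQ.2.PosDef ∧
      ∀ i : Fin 3,
        cQ.2 (v i - cQ.1) = 1 ∧
        (cQ.2 ((v i - cQ.1) + (v (i + 1) - v (i + 2))) -
          cQ.2 (v i - cQ.1) - cQ.2 (v (i + 1) - v (i + 2))) / 2 = 0 := by
  refine ⟨(stC v, stQ v hv), ⟨stQ_posDef v hv, ?_⟩, ?_⟩
  · -- existence: verify the six conditions
    have hEF := stEF v hv
    have hQ := stQ_apply v hv
    have A0 : stQ v hv (v 0 - stC v) = 1 := by
      rw [hQ, hEF (v 0 - stC v) 1 0 (by funext k; simp [stC]; try ring)]; norm_num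
    have A1 : stQ v hv (v 1 - stC v) = 1 := by
      rw [hQ, hEF (v 1 - stC v) 0 1 (by funext k; simp [stC]; try ring)]; norm_num
    have A2 : stQ v hv (v 2 - stC v) = 1 := by
      rw [hQ, hEF (v 2 - stC v) (-1) (-1) (by funext k; simp [stC]; try ring)]; norm_num
    have B0 : (stQ v hv ((v 0 - stC v) + (v 1 - v 2)) - stQ v hv (v 0 - stC v)
        - stQ v hv (v 1 - v 2)) / 2 = 0 := by
      rw [hQ, hQ, hQ,
        hEF (v 0 - stC v) 1 0 (by funext k; simp [stC]; try ring),
        hEF (v 1 - v 2) 1 2 (by funext k; simp [stC]; try ring),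
        hEF ((v 0 - stC v) + (v 1 - v 2)) 2 2 (by funext k; simp [stC]; try ring)]
      norm_num
    have B1 : (stQ v hv ((v 1 - stC v) + (v 2 - v 0)) - stQ v hv (v 1 - stC v)
        - stQ v hv (v 2 - v 0)) / 2 = 0 := by
      rw [hQ, hQ, hQ,
        hEF (v 1 - stC v) 0 1 (by funext k; simp [stC]; try ring),
        hEF (v 2 - v 0) (-2) (-1) (by funext k; simp [stC]; try ring),
        hEF ((v 1 - stC v) + (v 2 - v 0)) (-2) 0 (by funext k; simp [stC]; try ring)]
      norm_num
    have B2 : (stQ v hv ((v 2 - stC v) + (v 0 - v 1)) - stQ v hv (v 2 - stC v)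
        - stQ v hv (v 0 - v 1)) / 2 = 0 := by
      rw [hQ, hQ, hQ,
        hEF (v 2 - stC v) (-1) (-1) (by funext k; simp [stC]; try ring),
        hEF (v 0 - v 1) 1 (-1) (by funext k; simp [stC]; try ring),
        hEF ((v 2 - stC v) + (v 0 - v 1)) 0 (-2) (by funext k; simp [stC]; try ring)]
      norm_num
    intro i
    fin_cases i
    · exact ⟨A0, B0⟩
    · exact ⟨A1, B1⟩
    · exact ⟨A2, B2⟩
  · -- uniqueness
    rintro ⟨c, Q⟩ ⟨hpd, hcond⟩
    have q0 : Q (v 0 - c) = 1 := (hcond 0).1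
    have q1 : Q (v 1 - c) = 1 := (hcond 1).1
    have q2 : Q (v 2 - c) = 1 := (hcond 2).1
    have p0' : (Q ((v 0 - c) + (v 1 - v 2)) - Q (v 0 - c) - Q (v 1 - v 2))/2 = 0 :=
      (hcond 0).2
    have p1' : (Q ((v 1 - c) + (v 2 - v 0)) - Q (v 1 - c) - Q (v 2 - v 0))/2 = 0 :=
      (hcond 1).2
    have p0 : polar Q (v 0 - c) (v 1 - v 2) = 0 := by
      simp only [polar]; linarith
    have p1 : polar Q (v 1 - c) (v 2 - v 0) = 0 := by
      simp only [polar]; linarith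
    set u0 := v 0 - c with hu0
    set u1 := v 1 - c with hu1
    set u2 := v 2 - c with hu2
    set t := polar Q u0 u1 with htdef
    have w0 : v 1 - v 2 = u1 - u2 := (sub_sub_sub_cancel_right _ _ _).symm
    have w1 : v 2 - v 0 = u2 - u0 := (sub_sub_sub_cancel_right _ _ _).symm
    have e02 : polar Q u0 u2 = t := by
      rw [w0, polar_sub_right] at p0; linarith
    have pc10 : polar Q u1 u0 = t := (polar_comm Q u1 u0).trans htdef.symm
    have e12 : polar Q u1 u2 = t := by
      rw [w1, polar_sub_right, pc10] at p1; linarith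
    have qadd : ∀ x y : Fin 2 → ℝ, Q (x + y) = Q x + Q y + polar Q x y := by
      intro x y; simp only [polar]; ring
    have hne01 : u0 - u1 ≠ 0 := by
      rw [hu0, hu1, sub_sub_sub_cancel_right]
      exact sub_ne_zero.2 (hv.injective.ne (by decide))
    have ht2 : t < 2 := by
      have hd : Q (u0 - u1) = 2 - t := by
        rw [sub_eq_add_neg, qadd, QuadraticMap.map_neg, polar_neg_right, q0, q1, ← htdef]
        ring
      have := hpd _ hne01
      rw [hd] at this; linarith
    have hsumne : u0 + u1 ≠ 0 := by
      intro h
      have hu1e : u1 = -u0 := by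
        rw [← neg_eq_of_add_eq_zero_right h]
      have ht' : t = -2 := by
        rw [htdef, hu1e, polar_neg_right, polar_self, q0]; norm_num
      have h12 : polar Q u1 u2 = -polar Q u0 u2 := by rw [hu1e, polar_neg_left]
      rw [e12, e02] at h12; linarith
    have htm2 : -2 < t := by
      have hs : Q (u0 + u1) = 2 + t := by rw [qadd, q0, q1, ← htdef]; ring
      have := hpd _ hsumne
      rw [hs] at this; linarith
    have indep : LinearIndependent ℝ ![u0, u1] := by
      rw [LinearIndependent.pair_iff]
      intro s r hsr
      have h0 : Q (s • u0 + r • u1) = 0 := by rw [hsr, map_zero]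
      rw [qexpand, q0, q1, ← htdef] at h0
      have h4 : (4 - t*t) * r^2 ≤ 0 := by nlinarith [sq_nonneg (2*s + t*r)]
      have h5 : (0:ℝ) < 4 - t*t := by nlinarith
      have h6 : (4 - t*t) * r^2 = 0 := le_antisymm h4 (mul_nonneg h5.le (sq_nonneg r))
      have hr2 : r^2 = 0 := by
        rcases mul_eq_zero.1 h6 with h' | h'
        · nlinarith
        · exact h'
      have hr : r = 0 := pow_eq_zero_iff (two_ne_zero) |>.1 hr2
      rw [hr] at h0
      have hs2 : s^2 = 0 := by linear_combination h0
      have hs : s = 0 := pow_eq_zero_iff (two_ne_zero) |>.1 hs2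
      exact ⟨hs, hr⟩
    obtain ⟨α, β, hu2r⟩ : ∃ α β : ℝ, u2 = α • u0 + β • u1 := by
      let bb : Module.Basis (Fin 2) ℝ (Fin 2 → ℝ) :=
        basisOfLinearIndependentOfCardEqFinrank indep (by simp)
      have hbbc : ⇑bb = ![u0, u1] := coe_basisOfLinearIndependentOfCardEqFinrank _ _
      have hbb0 : bb 0 = u0 := by rw [hbbc]; rfl
      have hbb1 : bb 1 = u1 := by rw [hbbc]; rfl
      refine ⟨bb.equivFun u2 0, bb.equivFun u2 1, ?_⟩
      conv_lhs => rw [← bb.sum_equivFun u2]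
      rw [Fin.sum_univ_two, hbb0, hbb1]
    have pe20 : polar Q u2 u0 = t := (polar_comm Q u2 u0).trans e02
    have pe21 : polar Q u2 u1 = t := (polar_comm Q u2 u1).trans e12
    have eA : 2*α + β*t = t := by
      have h := pe20
      rw [hu2r, polar_add_left, polar_smul_left, polar_smul_left, polar_self, q0, pc10] at h
      simp only [smul_eq_mul, nsmul_eq_mul] at h
      push_cast at h
      linarith
    have eB : α*t + 2*β = t := by
      have h := pe21
      rw [hu2r, polar_add_left, polar_smul_left, polar_smul_left, polar_self, q1, ← htdef] at h
      simp only [smul_eq_mul, nsmul_eq_mul] at h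
      push_cast at h
      linarith
    have eC : α^2 + β^2 + α*β*t = 1 := by
      have h := q2
      rw [hu2r, qexpand, q0, q1, ← htdef] at h
      linarith
    have hαβ : α = β := by
      have h : (α - β) * (2 - t) = 0 := by linear_combination eA - eB
      rcases mul_eq_zero.1 h with h' | h'
      · linarith
      · linarith
    rw [← hαβ] at eA eC
    have ht1 : t = -1 := by
      have h2 : t^2 = t + 2 := by
        linear_combination (-(α*(2+t) + t)) * eA + (2+t) * eC
      have h3 : (t + 1) * (t - 2) = 0 := by linear_combination h2
      rcases mul_eq_zero.1 h3 with h' | h'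
      · linarith
      · linarith
    have hα : α = -1 := by rw [ht1] at eA; linarith
    have hβ : β = -1 := hαβ ▸ hα
    have hu2v : u2 = -u0 - u1 := by
      rw [hu2r, hα, hβ]
      simp only [neg_one_smul]
      abel
    have hceq : c = stC v := by
      funext k
      have h := congrFun hu2v k
      rw [hu0, hu1, hu2] at h
      simp only [Pi.sub_apply, Pi.neg_apply] at h
      show c k = (3:ℝ)⁻¹ * ((v 0 + v 1 + v 2) k)
      simp only [Pi.add_apply]
      linarith
    have key : ∀ x, Q x = stQ v hv x := by
      intro x
      have hx := (stBasis v hv).sum_equivFun x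
      rw [Fin.sum_univ_two, stBasis_zero, stBasis_one] at hx
      have hx' : x = ((stBasis v hv).equivFun x 0) • u0 + ((stBasis v hv).equivFun x 1) • u1 := by
        rw [hu0, hu1, hceq]; exact hx.symm
      rw [stQ_apply]
      conv_lhs => rw [hx']
      rw [qexpand, q0, q1, ← htdef, ht1]
      ring
    exact Prod.ext hceq (DFunLike.ext _ _ key)
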